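/- arXiv:1405.7616 — 4 statements merged into one kernel-verified Lean document; each statement's English description precedes it below -/
import Mathlib

section
/- Let d ≥ 1, let U ⊆ ℝ^d be open and convex, let f ∈ C²(U, ℝ^d), η ∈ C²(U, ℝ) and q ∈ C¹(U, ℝ) satisfy the compatibility condition Dq(u) = Dη(u) Df(u) for all u ∈ U (the gradient row vector of q equals the gradient row vector of η multiplied by the Jacobian matrix of f). Then for every u ∈ U the matrix identity (Df(u))ᵀ D²η(u) = D²η(u) Df(u) holds, where D²η(u) is the Hessian matrix of η at u. -/
/-- **Existence of an entropy flux implies the symmetry relation (2.9)**: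
if `Dq(u) = Dη(u) Df(u)` on the open convex set `U`, then
`(Df(u))ᵀ D²η(u) = D²η(u) Df(u)` for every `u ∈ U`, expressed as the bilinear identity
`D²η(u)(Df(u)v, w) = D²η(u)(v, Df(u)w)` for all directions `v, w`. -/
theorem entropy_flux_implies_hessian_symmetry
    (d : ℕ) (hd : 1 ≤ d)
    (U : Set (EuclideanSpace ℝ (Fin d))) (hUopen : IsOpen U) (hUconv : Convex ℝ U)
    (f : EuclideanSpace ℝ (Fin d) → EuclideanSpace ℝ (Fin d))
    (η q : EuclideanSpace ℝ (Fin d) → ℝ)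
    (hf : ContDiffOn ℝ 2 f U) (hη : ContDiffOn ℝ 2 η U) (hq : ContDiffOn ℝ 1 q U)
    (hcompat : ∀ u ∈ U, fderiv ℝ q u = (fderiv ℝ η u).comp (fderiv ℝ f u)) :
    ∀ u ∈ U, ∀ v w : EuclideanSpace ℝ (Fin d),
      fderiv ℝ (fun x => fderiv ℝ η x (fderiv ℝ f u v)) u w =
        fderiv ℝ (fun x => fderiv ℝ η x v) u (fderiv ℝ f u w) := by
  intro u hu v w
  have hUu : U ∈ nhds u := hUopen.mem_nhds hu
  have hηAt : ContDiffAt ℝ 2 η u := hη.contDiffAt hUu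
  have hfAt : ContDiffAt ℝ 2 f u := hf.contDiffAt hUu
  have hη' : ContDiffAt ℝ 1 (fderiv ℝ η) u := hηAt.fderiv_right (by norm_num)
  have hf' : ContDiffAt ℝ 1 (fderiv ℝ f) u := hfAt.fderiv_right (by norm_num)
  have hη'd : DifferentiableAt ℝ (fderiv ℝ η) u := hη'.differentiableAt one_ne_zero
  have hf'd : DifferentiableAt ℝ (fderiv ℝ f) u := hf'.differentiableAt one_ne_zero
  set Hη := fderiv ℝ (fderiv ℝ η) u with hHη
  set Hf := fderiv ℝ (fderiv ℝ f) u with hHf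
  set A := fderiv ℝ f u with hA
  set Dη := fderiv ℝ η u with hDη
  have hηev : ∀ᶠ y in nhds u, HasFDerivAt η (fderiv ℝ η y) y := by
    filter_upwards [hUu] with y hy
    exact (((hη.differentiableOn two_ne_zero).differentiableAt
      (hUopen.mem_nhds hy))).hasFDerivAt
  have hfev : ∀ᶠ y in nhds u, HasFDerivAt f (fderiv ℝ f y) y := by
    filter_upwards [hUu] with y hy
    exact (((hf.differentiableOn two_ne_zero).differentiableAt
      (hUopen.mem_nhds hy))).hasFDerivAt
  have symmη : ∀ a b : EuclideanSpace ℝ (Fin d), Hη a b = Hη b a := fun a b =>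
    second_derivative_symmetric_of_eventually hηev hη'd.hasFDerivAt a b
  have symmf : ∀ a b : EuclideanSpace ℝ (Fin d), Hf a b = Hf b a := fun a b =>
    second_derivative_symmetric_of_eventually hfev hf'd.hasFDerivAt a b
  have hqev : ∀ᶠ y in nhds u, HasFDerivAt q ((fderiv ℝ η y).comp (fderiv ℝ f y)) y := by
    filter_upwards [hUu] with y hy
    have hdq : DifferentiableAt ℝ q y :=
      (hq.differentiableOn one_ne_zero).differentiableAt (hUopen.mem_nhds hy)
    have := hdq.hasFDerivAt
    rwa [hcompat y hy] at this
  have hφ : HasFDerivAt (fun y => (fderiv ℝ η y).comp (fderiv ℝ f y))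
      ((ContinuousLinearMap.compL ℝ (EuclideanSpace ℝ (Fin d)) (EuclideanSpace ℝ (Fin d)) ℝ Dη).comp Hf
        + ((ContinuousLinearMap.compL ℝ (EuclideanSpace ℝ (Fin d)) (EuclideanSpace ℝ (Fin d)) ℝ).flip A).comp Hη) u :=
    hη'd.hasFDerivAt.clm_comp hf'd.hasFDerivAt
  have symmq := fun a b =>
    second_derivative_symmetric_of_eventually hqev hφ a b
  have key2 : Hη w (A v) = Hη v (A w) := by
    have h1 := symmq w v
    simp only [ContinuousLinearMap.add_apply, ContinuousLinearMap.coe_comp',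
      Function.comp_apply, ContinuousLinearMap.compL_apply,
      ContinuousLinearMap.flip_apply] at h1
    rw [symmf w v] at h1
    linarith
  have hL : ∀ c : EuclideanSpace ℝ (Fin d),
      HasFDerivAt (fun x => fderiv ℝ η x c) (Hη.flip c) u := by
    intro c
    have := hη'd.hasFDerivAt.clm_apply (hasFDerivAt_const c u)
    simpa using this
  have eL : fderiv ℝ (fun x => fderiv ℝ η x (A v)) u = Hη.flip (A v) := (hL (A v)).fderiv
  have eR : fderiv ℝ (fun x => fderiv ℝ η x v) u = Hη.flip v := (hL v).fderiv
  rw [eL, eR]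
  simp only [ContinuousLinearMap.flip_apply]
  rw [key2, symmη v (A w)]
end

section
/- Fix d ≥ 1, a partition 0 = x₀ < x₁ < ⋯ < x_N = 1 of I = [0,1] with cells I_n = [x_n, x_{n+1}], an integer p ≥ 1, an open convex set U ⊆ ℝ^d, a C¹ function f : U → ℝ^d, a function w : U × U → U, and u_h ∈ 𝕍_p taking values in U. Suppose f̂ ∈ 𝕍_{p+1} satisfies: (a) Σ_{n=0}^{N−1} ∫_{I_n} ∂ₓf̂ · φ dx = Σ_{n=0}^{N−1} ∫_{I_n} ∂ₓ(f∘u_h) · φ dx + Σ_{n=0}^{N−1} ( f(w(u_h(x_n^−), u_h(x_n^+))) · ⟦φ⟧_n − ⟦(f∘u_h) · φ⟧_n ) for all φ ∈ 𝕍_p, and (b) f̂(x_n^+) = f(w(u_h(x_n^−), u_h(x_n^+))) for all n = 0, …, N−1 (indices taken modulo N for periodicity, so u_h(x₀^−) := u_h(x_N^−) and u_h(x_N^+) := u_h(x₀^+)). Then f̂ is continuous on the periodic interval, with f̂(x_{n+1}^−) = f(w(u_h(x_{n+1}^−), u_h(x_{n+1}^+))) for each n, and f̂ satisfies the orthogonality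 property Σ_{n=0}^{N−1} ∫_{I_n} (f̂ − f∘u_h) · φ dx = 0 for all φ ∈ 𝕍_{p−1}. -/
/-- evaluation of a vector of polynomials -/
noncomputable def pev {d : ℕ} (P : Fin d → Polynomial ℝ) (x : ℝ) : Fin d → ℝ :=
  fun i => (P i).eval x

/-- value from the left of a piecewise polynomial (cells `I_n = [xp n, xp (n+1)]`,
`n = 0, …, N-1`) at the node `xp n`, with periodic wraparound at `n = 0`. -/
noncomputable def nodeMinus {d : ℕ} (N : ℕ) (xp : ℕ → ℝ)
    (g : ℕ → Fin d → Polynomial ℝ) (n : ℕ) : Fin d → ℝ :=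
  if n = 0 then pev (g (N - 1)) (xp N) else pev (g (n - 1)) (xp n)

/-- value from the right of a piecewise polynomial at the node `xp n`, with periodic
wraparound at `n = N`. -/
noncomputable def nodePlus {d : ℕ} (N : ℕ) (xp : ℕ → ℝ)
    (g : ℕ → Fin d → Polynomial ℝ) (n : ℕ) : Fin d → ℝ :=
  if n = N then pev (g 0) (xp 0) else pev (g n) (xp n)

/-- Euclidean dot product on `ℝ^d` -/
def dotR {d : ℕ} (a b : Fin d → ℝ) : ℝ := ∑ i, a i * b i

/- ### Auxiliary material -/

open Polynomial MeasureTheory intervalIntegral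

/-- cyclic predecessor on `{0, …, N-1}` -/
def predN (N n : ℕ) : ℕ := if n = 0 then N - 1 else n - 1

/-- cyclic successor on `{0, …, N-1}` -/
def succN (N n : ℕ) : ℕ := if n + 1 = N then 0 else n + 1

lemma predN_lt {N n : ℕ} (hN : 1 ≤ N) (hn : n < N) : predN N n < N := by
  by_cases h : n = 0 <;> simp only [predN, h, if_pos, if_neg, if_true, if_false] <;> omega

lemma succN_lt {N n : ℕ} (hN : 1 ≤ N) (hn : n < N) : succN N n < N := by
  by_cases h : n + 1 = N <;> simp only [succN, h, if_pos, if_neg, if_true, if_false] <;> omega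

lemma succN_predN {N n : ℕ} (hN : 1 ≤ N) (hn : n < N) : succN N (predN N n) = n := by
  by_cases h : n = 0
  · subst h
    simp [predN, succN, Nat.sub_add_cancel hN]
  · simp only [predN, if_neg h, succN]
    rw [if_neg (by omega)]
    omega

lemma predN_succN {N n : ℕ} (hN : 1 ≤ N) (hn : n < N) : predN N (succN N n) = n := by
  by_cases h : n + 1 = N
  · simp [succN, h, predN]; omega
  · simp [succN, h, predN]

lemma sum_comp_predN (N : ℕ) (hN : 1 ≤ N) (A : ℕ → ℝ) :
    ∑ n ∈ Finset.range N, A (predN N n) = ∑ n ∈ Finset.range N, A n := by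
  refine Finset.sum_nbij' (fun n => predN N n) (fun n => succN N n) ?_ ?_ ?_ ?_ ?_ <;>
    intro a ha <;> simp only [Finset.mem_range] at *
  · exact predN_lt hN ha
  · exact succN_lt hN ha
  · exact succN_predN hN ha
  · exact predN_succN hN ha

/-- node values, rewritten in terms of cyclic predecessor -/
lemma nodeMinus_eq {d : ℕ} (N : ℕ) (hN : 1 ≤ N) (xp : ℕ → ℝ)
    (g : ℕ → Fin d → Polynomial ℝ) (n : ℕ) (hn : n < N) :
    nodeMinus N xp g n = pev (g (predN N n)) (xp (predN N n + 1)) := by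
  unfold nodeMinus predN
  by_cases h : n = 0
  · rw [if_pos h, if_pos h, Nat.sub_add_cancel hN]
  · rw [if_neg h, if_neg h]
    have hh : n - 1 + 1 = n := by omega
    rw [hh]

lemma nodePlus_eq {d : ℕ} (N : ℕ) (xp : ℕ → ℝ)
    (g : ℕ → Fin d → Polynomial ℝ) (n : ℕ) (hn : n < N) :
    nodePlus N xp g n = pev (g n) (xp n) := if_neg (by omega)

lemma nodePlus_succ {d : ℕ} (N : ℕ) (xp : ℕ → ℝ)
    (g : ℕ → Fin d → Polynomial ℝ) (n : ℕ) :
    nodePlus N xp g (n + 1) = pev (g (succN N n)) (xp (succN N n)) := by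
  unfold nodePlus succN
  by_cases h : n + 1 = N
  · rw [if_pos h, if_pos h]
  · rw [if_neg h, if_neg h]

lemma nodePlus_predN_succ {d : ℕ} (N : ℕ) (hN : 1 ≤ N) (xp : ℕ → ℝ)
    (g : ℕ → Fin d → Polynomial ℝ) (n : ℕ) (hn : n < N) :
    nodePlus N xp g (predN N n + 1) = nodePlus N xp g n := by
  by_cases h : n = 0
  · subst h
    have h1 : predN N 0 + 1 = N := by unfold predN; simp [Nat.sub_add_cancel hN]
    rw [h1]
    unfold nodePlus
    rw [if_pos rfl, if_neg (by omega)]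
  · have h1 : predN N n + 1 = n := by unfold predN; rw [if_neg h]; omega
    rw [h1]

/-- polynomial antiderivative -/
noncomputable def pint (q : Polynomial ℝ) : Polynomial ℝ :=
  ∑ k ∈ Finset.range (q.natDegree + 1), C (q.coeff k / (k + 1)) * X ^ (k + 1)

lemma derivative_pint (q : Polynomial ℝ) : derivative (pint q) = q := by
  unfold pint
  rw [map_sum]
  have h : ∀ k ∈ Finset.range (q.natDegree + 1),
      derivative (C (q.coeff k / (k + 1)) * X ^ (k + 1)) = C (q.coeff k) * X ^ k := by
    intro k _
    rw [derivative_C_mul, derivative_X_pow, ← mul_assoc, ← C_mul, Nat.add_sub_cancel]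
    congr 2
    push_cast
    field_simp
  rw [Finset.sum_congr rfl h]
  conv_rhs => rw [q.as_sum_range' (q.natDegree + 1) (Nat.lt_succ_self _)]
  simp [C_mul_X_pow_eq_monomial]

lemma natDegree_pint (q : Polynomial ℝ) : (pint q).natDegree ≤ q.natDegree + 1 := by
  unfold pint
  apply Polynomial.natDegree_sum_le_of_forall_le
  intro k hk
  refine (natDegree_C_mul_le _ _).trans ?_
  simp only [natDegree_X_pow]
  exact Nat.succ_le_succ (Nat.lt_succ_iff.mp (Finset.mem_range.mp hk))

lemma poly_contDiff (p : Polynomial ℝ) : ContDiff ℝ 1 fun x : ℝ => p.eval x := by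
  have h : (fun x : ℝ => p.eval x)
      = fun x : ℝ => ∑ i ∈ Finset.range (p.natDegree + 1), p.coeff i * x ^ i :=
    funext fun x => p.eval_eq_sum_range x
  rw [h]
  exact ContDiff.sum fun i _ => contDiff_const.mul (contDiff_id.pow i)

lemma pev_contDiff {d : ℕ} (P : Fin d → Polynomial ℝ) : ContDiff ℝ 1 fun x => pev P x :=
  contDiff_pi.2 fun i => poly_contDiff (P i)

lemma pev_continuous {d : ℕ} (P : Fin d → Polynomial ℝ) : Continuous fun x => pev P x :=
  continuous_pi fun i => (P i).continuous

lemma pev_hasDerivAt {d : ℕ} (P : Fin d → Polynomial ℝ) (x : ℝ) :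
    HasDerivAt (fun y => pev P y) (pev (fun i => derivative (P i)) x) x :=
  hasDerivAt_pi.2 fun i => (P i).hasDerivAt x

lemma deriv_pev {d : ℕ} (P : Fin d → Polynomial ℝ) (x : ℝ) :
    deriv (fun y => pev P y) x = pev (fun i => derivative (P i)) x :=
  (pev_hasDerivAt P x).deriv

lemma dotR_sub_left {d : ℕ} (a b c : Fin d → ℝ) : dotR (a - b) c = dotR a c - dotR b c := by
  simp [dotR, Pi.sub_apply, sub_mul, Finset.sum_sub_distrib]

lemma dotR_sub_right {d : ℕ} (a b c : Fin d → ℝ) : dotR a (b - c) = dotR a b - dotR a c := by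
  simp [dotR, Pi.sub_apply, mul_sub, Finset.sum_sub_distrib]

lemma eq_zero_of_dotR_self {d : ℕ} {x : Fin d → ℝ} (h : dotR x x = 0) : x = 0 := by
  funext i
  have h2 := (Finset.sum_eq_zero_iff_of_nonneg
    (fun j (_ : j ∈ Finset.univ) => mul_self_nonneg (x j))).1 h i (Finset.mem_univ i)
  exact mul_self_eq_zero.1 h2

lemma continuousOn_dotR {d : ℕ} {s : Set ℝ} {g h : ℝ → Fin d → ℝ}
    (hg : ContinuousOn g s) (hh : ContinuousOn h s) :
    ContinuousOn (fun x => dotR (g x) (h x)) s := by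
  unfold dotR
  exact continuousOn_finset_sum _ fun i _ =>
    ((continuous_apply i).comp_continuousOn hg).mul ((continuous_apply i).comp_continuousOn hh)

/-- cellwise integration by parts for vector-valued functions against piecewise polynomials -/
lemma ibp_vec {d : ℕ} {a b : ℝ} (hab : a ≤ b) (g : ℝ → Fin d → ℝ) (O : Set ℝ)
    (hO : IsOpen O) (hsub : Set.Icc a b ⊆ O) (hg : ContDiffOn ℝ 1 g O)
    (φ ψ : Fin d → Polynomial ℝ) (hψ : ∀ i, derivative (φ i) = ψ i) :
    ∫ x in a..b, dotR (deriv g x) (pev φ x)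
      = dotR (g b) (pev φ b) - dotR (g a) (pev φ a)
        - ∫ x in a..b, dotR (g x) (pev ψ x) := by
  have huIcc : Set.uIcc a b = Set.Icc a b := Set.uIcc_of_le hab
  have hdcont : ContinuousOn (deriv g) (Set.Icc a b) :=
    (hg.continuousOn_deriv_of_isOpen hO le_rfl).mono hsub
  have hgcont : ContinuousOn g (Set.Icc a b) := hg.continuousOn.mono hsub
  have hder : ∀ x ∈ Set.Icc a b, HasDerivAt g (deriv g x) x := fun x hx =>
    ((hg.contDiffAt (hO.mem_nhds (hsub hx))).differentiableAt one_ne_zero).hasDerivAt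
  have hvint : ∀ i : Fin d, IntervalIntegrable (fun x => deriv g x i) volume a b := by
    intro i
    apply ContinuousOn.intervalIntegrable
    rw [huIcc]
    exact (continuous_apply i).comp_continuousOn hdcont
  have comp : ∀ i : Fin d,
      (∫ x in a..b, deriv g x i * (φ i).eval x)
        = g b i * (φ i).eval b - g a i * (φ i).eval a
          - ∫ x in a..b, g x i * (ψ i).eval x := by
    intro i
    have hu : ∀ x ∈ Set.uIcc a b, HasDerivAt (fun y => (φ i).eval y) ((ψ i).eval x) x := by
      intro x _
      have h := (φ i).hasDerivAt x
      rwa [hψ i] at h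
    have hv : ∀ x ∈ Set.uIcc a b, HasDerivAt (fun y => g y i) (deriv g x i) x := by
      intro x hx
      rw [huIcc] at hx
      exact hasDerivAt_pi.1 (hder x hx) i
    have hu' : IntervalIntegrable (fun x => (ψ i).eval x) volume a b :=
      ((ψ i).continuous).intervalIntegrable a b
    have H := integral_mul_deriv_eq_deriv_mul hu hv hu' (hvint i)
    calc (∫ x in a..b, deriv g x i * (φ i).eval x)
        = ∫ x in a..b, (φ i).eval x * deriv g x i := by
          simp only [mul_comm]
      _ = (φ i).eval b * g b i - (φ i).eval a * g a i
            - ∫ x in a..b, (ψ i).eval x * g x i := H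
      _ = g b i * (φ i).eval b - g a i * (φ i).eval a
            - ∫ x in a..b, g x i * (ψ i).eval x := by
          simp only [mul_comm]
  have hint1 : ∀ i ∈ (Finset.univ : Finset (Fin d)),
      IntervalIntegrable (fun x => deriv g x i * (φ i).eval x) volume a b := by
    intro i _
    apply ContinuousOn.intervalIntegrable
    rw [huIcc]
    exact ((continuous_apply i).comp_continuousOn hdcont).mul ((φ i).continuous.continuousOn)
  have hint2 : ∀ i ∈ (Finset.univ : Finset (Fin d)),
      IntervalIntegrable (fun x => g x i * (ψ i).eval x) volume a b := by
    intro i _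
    apply ContinuousOn.intervalIntegrable
    rw [huIcc]
    exact ((continuous_apply i).comp_continuousOn hgcont).mul ((ψ i).continuous.continuousOn)
  simp only [dotR, pev]
  rw [integral_finset_sum hint1, integral_finset_sum hint2]
  rw [← Finset.sum_sub_distrib, ← Finset.sum_sub_distrib]
  exact Finset.sum_congr rfl fun i _ => comp i

/-- The master identity obtained by integrating the defining relation of `f̂` by parts
against a test function with prescribed cell derivatives and right-endpoint values. -/
lemma key_identity
    (d : ℕ) (N : ℕ) (hN : 1 ≤ N) (p : ℕ) (hp : 1 ≤ p)
    (xp : ℕ → ℝ) (hxmono : ∀ n < N, xp n < xp (n + 1))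
    (U : Set (Fin d → ℝ)) (hUopen : IsOpen U)
    (f : (Fin d → ℝ) → (Fin d → ℝ)) (hf : ContDiffOn ℝ 1 f U)
    (w : (Fin d → ℝ) → (Fin d → ℝ) → (Fin d → ℝ))
    (uh : ℕ → Fin d → Polynomial ℝ)
    (huhU : ∀ n < N, ∀ x ∈ Set.Icc (xp n) (xp (n + 1)), pev (uh n) x ∈ U)
    (fhat : ℕ → Fin d → Polynomial ℝ)
    (hfhatdef : ∀ φ : ℕ → Fin d → Polynomial ℝ, (∀ n i, (φ n i).natDegree ≤ p) →
      (∑ n ∈ Finset.range N, ∫ x in xp n..xp (n + 1),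
          dotR (pev (fun i => Polynomial.derivative (fhat n i)) x) (pev (φ n) x)) =
      (∑ n ∈ Finset.range N, ∫ x in xp n..xp (n + 1),
          dotR (deriv (fun y => f (pev (uh n) y)) x) (pev (φ n) x)) +
      ∑ n ∈ Finset.range N,
        (dotR (f (w (nodeMinus N xp uh n) (nodePlus N xp uh n)))
            (nodeMinus N xp φ n - nodePlus N xp φ n) -
          (dotR (f (nodeMinus N xp uh n)) (nodeMinus N xp φ n) -
            dotR (f (nodePlus N xp uh n)) (nodePlus N xp φ n))))
    (hfhatbc : ∀ n < N,
      pev (fhat n) (xp n) = f (w (nodeMinus N xp uh n) (nodePlus N xp uh n)))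
    (ψ : ℕ → Fin d → Polynomial ℝ) (hψdeg : ∀ n i, (ψ n i).degree < (p : ℕ))
    (v : ℕ → Fin d → ℝ) :
    ∑ n ∈ Finset.range N,
        dotR (pev (fhat n) (xp (n + 1))
          - f (w (pev (uh n) (xp (n + 1))) (nodePlus N xp uh (n + 1)))) (v n)
      = ∑ n ∈ Finset.range N, ∫ x in xp n..xp (n + 1),
          dotR (pev (fhat n) x - f (pev (uh n) x)) (pev (ψ n) x) := by
  classical
  set Φ : ℕ → Fin d → Polynomial ℝ :=
    fun n i => pint (ψ n i) + C (v n i - (pint (ψ n i)).eval (xp (n + 1))) with hΦdef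
  have hΦder : ∀ n i, derivative (Φ n i) = ψ n i := by
    intro n i
    rw [hΦdef]
    simp [derivative_pint]
  have hΦdeg : ∀ n i, (Φ n i).natDegree ≤ p := by
    intro n i
    have h1 : (pint (ψ n i)).natDegree ≤ p := by
      refine (natDegree_pint _).trans ?_
      by_cases h0 : ψ n i = 0
      · rw [h0]
        simpa using hp
      · have h2 := (Polynomial.natDegree_lt_iff_degree_lt h0).mpr (hψdeg n i)
        omega
    rw [hΦdef]
    refine (Polynomial.natDegree_add_le _ _).trans (max_le h1 ?_)
    simp
  have hΦval : ∀ n, pev (Φ n) (xp (n + 1)) = v n := by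
    intro n
    funext i
    rw [hΦdef]
    simp [pev]
  -- cellwise integration by parts for the `f̂` terms
  have S1 : ∀ n ∈ Finset.range N,
      (∫ x in xp n..xp (n + 1),
          dotR (pev (fun i => Polynomial.derivative (fhat n i)) x) (pev (Φ n) x))
        = dotR (pev (fhat n) (xp (n + 1))) (v n)
          - dotR (f (w (pev (uh (predN N n)) (xp (predN N n + 1))) (pev (uh n) (xp n))))
              (pev (Φ n) (xp n))
          - ∫ x in xp n..xp (n + 1), dotR (pev (fhat n) x) (pev (ψ n) x) := by
    intro n hn'
    have hn := Finset.mem_range.mp hn'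
    have hab := (hxmono n hn).le
    have H := ibp_vec hab (fun x => pev (fhat n) x) Set.univ isOpen_univ
      (Set.subset_univ _) ((pev_contDiff (fhat n)).contDiffOn) (Φ n) (ψ n) (hΦder n)
    simp only [deriv_pev] at H
    rw [H, hΦval n, hfhatbc n hn, nodeMinus_eq N hN xp uh n hn, nodePlus_eq N xp uh n hn]
  -- cellwise integration by parts for the `f ∘ u_h` terms
  have S2 : ∀ n ∈ Finset.range N,
      (∫ x in xp n..xp (n + 1),
          dotR (deriv (fun y => f (pev (uh n) y)) x) (pev (Φ n) x))
        = dotR (f (pev (uh n) (xp (n + 1)))) (v n)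
          - dotR (f (pev (uh n) (xp n))) (pev (Φ n) (xp n))
          - ∫ x in xp n..xp (n + 1), dotR (f (pev (uh n) x)) (pev (ψ n) x) := by
    intro n hn'
    have hn := Finset.mem_range.mp hn'
    have hab := (hxmono n hn).le
    have hO : IsOpen ((fun x => pev (uh n) x) ⁻¹' U) := hUopen.preimage (pev_continuous (uh n))
    have hsub : Set.Icc (xp n) (xp (n + 1)) ⊆ (fun x => pev (uh n) x) ⁻¹' U :=
      fun x hx => huhU n hn x hx
    have hcomp : ContDiffOn ℝ 1 (fun y => f (pev (uh n) y)) ((fun x => pev (uh n) x) ⁻¹' U) := by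
      have h := hf.comp ((pev_contDiff (uh n)).contDiffOn
        (s := (fun x => pev (uh n) x) ⁻¹' U)) (fun x hx => hx)
      exact h
    have H := ibp_vec hab (fun y => f (pev (uh n) y)) ((fun x => pev (uh n) x) ⁻¹' U)
      hO hsub hcomp (Φ n) (ψ n) (hΦder n)
    rw [H, hΦval n]
  -- boundary terms
  have SBT : ∀ n ∈ Finset.range N,
      (dotR (f (w (nodeMinus N xp uh n) (nodePlus N xp uh n)))
          (nodeMinus N xp Φ n - nodePlus N xp Φ n) -
        (dotR (f (nodeMinus N xp uh n)) (nodeMinus N xp Φ n) -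
          dotR (f (nodePlus N xp uh n)) (nodePlus N xp Φ n)))
        = dotR (f (w (pev (uh (predN N n)) (xp (predN N n + 1))) (pev (uh n) (xp n))))
            (v (predN N n))
          - dotR (f (w (pev (uh (predN N n)) (xp (predN N n + 1))) (pev (uh n) (xp n))))
              (pev (Φ n) (xp n))
          - (dotR (f (pev (uh (predN N n)) (xp (predN N n + 1)))) (v (predN N n))
            - dotR (f (pev (uh n) (xp n))) (pev (Φ n) (xp n))) := by
    intro n hn'
    have hn := Finset.mem_range.mp hn'
    rw [nodeMinus_eq N hN xp uh n hn, nodePlus_eq N xp uh n hn,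
      nodeMinus_eq N hN xp Φ n hn, nodePlus_eq N xp Φ n hn, hΦval (predN N n),
      dotR_sub_right]
  -- splitting the orthogonality integrand
  have J12 : ∀ n ∈ Finset.range N,
      (∫ x in xp n..xp (n + 1), dotR (pev (fhat n) x - f (pev (uh n) x)) (pev (ψ n) x))
        = (∫ x in xp n..xp (n + 1), dotR (pev (fhat n) x) (pev (ψ n) x))
          - ∫ x in xp n..xp (n + 1), dotR (f (pev (uh n) x)) (pev (ψ n) x) := by
    intro n hn'
    have hn := Finset.mem_range.mp hn'
    have hab := (hxmono n hn).le
    have huIcc : Set.uIcc (xp n) (xp (n + 1)) = Set.Icc (xp n) (xp (n + 1)) :=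
      Set.uIcc_of_le hab
    have h1 : IntervalIntegrable (fun x => dotR (pev (fhat n) x) (pev (ψ n) x))
        volume (xp n) (xp (n + 1)) := by
      apply ContinuousOn.intervalIntegrable
      exact continuousOn_dotR (pev_continuous (fhat n)).continuousOn
        (pev_continuous (ψ n)).continuousOn
    have h2 : IntervalIntegrable (fun x => dotR (f (pev (uh n) x)) (pev (ψ n) x))
        volume (xp n) (xp (n + 1)) := by
      apply ContinuousOn.intervalIntegrable
      rw [huIcc]
      refine continuousOn_dotR ?_ (pev_continuous (ψ n)).continuousOn
      exact hf.continuousOn.comp (pev_continuous (uh n)).continuousOn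
        (fun x hx => huhU n hn x hx)
    rw [← intervalIntegral.integral_sub h1 h2]
    apply intervalIntegral.integral_congr
    intro x _
    exact dotR_sub_left _ _ _
  -- the two cyclic reindexings
  have RI1 : ∑ n ∈ Finset.range N,
      dotR (f (w (pev (uh (predN N n)) (xp (predN N n + 1))) (pev (uh n) (xp n))))
        (v (predN N n))
      = ∑ n ∈ Finset.range N,
        dotR (f (w (pev (uh n) (xp (n + 1))) (nodePlus N xp uh (n + 1)))) (v n) := by
    have h1 : ∀ n ∈ Finset.range N,
        dotR (f (w (pev (uh (predN N n)) (xp (predN N n + 1))) (pev (uh n) (xp n))))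
          (v (predN N n))
        = (fun m => dotR (f (w (pev (uh (predN N (succN N m)))
            (xp (predN N (succN N m) + 1))) (pev (uh (succN N m)) (xp (succN N m)))))
            (v m)) (predN N n) := by
      intro n hn'
      have hn := Finset.mem_range.mp hn'
      simp only
      rw [succN_predN hN hn]
    refine (Finset.sum_congr rfl h1).trans ?_
    refine (sum_comp_predN N hN (fun m => dotR (f (w (pev (uh (predN N (succN N m)))
        (xp (predN N (succN N m) + 1))) (pev (uh (succN N m)) (xp (succN N m)))))
        (v m))).trans ?_
    refine Finset.sum_congr rfl fun n hn' => ?_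
    have hn := Finset.mem_range.mp hn'
    rw [predN_succN hN hn, nodePlus_succ]
  have RI2 : ∑ n ∈ Finset.range N,
      dotR (f (pev (uh (predN N n)) (xp (predN N n + 1)))) (v (predN N n))
      = ∑ n ∈ Finset.range N, dotR (f (pev (uh n) (xp (n + 1)))) (v n) :=
    sum_comp_predN N hN (fun m => dotR (f (pev (uh m) (xp (m + 1)))) (v m))
  -- assemble
  have E := hfhatdef Φ hΦdeg
  rw [Finset.sum_congr rfl S1, Finset.sum_congr rfl S2, Finset.sum_congr rfl SBT] at E
  have hGL : ∀ n ∈ Finset.range N,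
      dotR (pev (fhat n) (xp (n + 1))
          - f (w (pev (uh n) (xp (n + 1))) (nodePlus N xp uh (n + 1)))) (v n)
        = dotR (pev (fhat n) (xp (n + 1))) (v n)
          - dotR (f (w (pev (uh n) (xp (n + 1))) (nodePlus N xp uh (n + 1)))) (v n) :=
    fun n _ => dotR_sub_left _ _ _
  rw [Finset.sum_congr rfl hGL, Finset.sum_congr rfl J12]
  simp only [Finset.sum_sub_distrib] at E ⊢
  linarith [E, RI1, RI2]

/-- **Continuity and orthogonality of the flux reconstruction `f̂`** (Lemma 4.3 of the
paper): if `f̂ ∈ 𝕍_{p+1}` satisfies the defining relations (4.4)–(4.5) of Definition 4.2,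
then `f̂` is continuous on the periodic interval with
`f̂(x_{n+1}^-) = f(w(u_h(x_{n+1}^-), u_h(x_{n+1}^+)))`, and
`Σ_n ∫_{I_n} (f̂ - f∘u_h)·φ dx = 0` for all `φ ∈ 𝕍_{p-1}`. Piecewise polynomials in
`𝕍_q` are given by their cellwise polynomial components. -/
theorem flux_reconstruction_continuity_and_orthogonality
    (d : ℕ) (hd : 1 ≤ d) (N : ℕ) (hN : 1 ≤ N) (p : ℕ) (hp : 1 ≤ p)
    (xp : ℕ → ℝ) (hx0 : xp 0 = 0) (hxN : xp N = 1)
    (hxmono : ∀ n < N, xp n < xp (n + 1))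
    (U : Set (Fin d → ℝ)) (hUopen : IsOpen U) (hUconv : Convex ℝ U)
    (f : (Fin d → ℝ) → (Fin d → ℝ)) (hf : ContDiffOn ℝ 1 f U)
    (w : (Fin d → ℝ) → (Fin d → ℝ) → (Fin d → ℝ))
    (hwU : ∀ a ∈ U, ∀ b ∈ U, w a b ∈ U)
    -- the dG function u_h ∈ 𝕍_p, with values in U
    (uh : ℕ → Fin d → Polynomial ℝ) (huhdeg : ∀ n i, (uh n i).natDegree ≤ p)
    (huhU : ∀ n < N, ∀ x ∈ Set.Icc (xp n) (xp (n + 1)), pev (uh n) x ∈ U)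
    -- the reconstruction f̂ ∈ 𝕍_{p+1} and its defining properties (4.4), (4.5)
    (fhat : ℕ → Fin d → Polynomial ℝ) (hfhatdeg : ∀ n i, (fhat n i).natDegree ≤ p + 1)
    (hfhatdef : ∀ φ : ℕ → Fin d → Polynomial ℝ, (∀ n i, (φ n i).natDegree ≤ p) →
      (∑ n ∈ Finset.range N, ∫ x in xp n..xp (n + 1),
          dotR (pev (fun i => Polynomial.derivative (fhat n i)) x) (pev (φ n) x)) =
      (∑ n ∈ Finset.range N, ∫ x in xp n..xp (n + 1),
          dotR (deriv (fun y => f (pev (uh n) y)) x) (pev (φ n) x)) +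
      ∑ n ∈ Finset.range N,
        (dotR (f (w (nodeMinus N xp uh n) (nodePlus N xp uh n)))
            (nodeMinus N xp φ n - nodePlus N xp φ n) -
          (dotR (f (nodeMinus N xp uh n)) (nodeMinus N xp φ n) -
            dotR (f (nodePlus N xp uh n)) (nodePlus N xp φ n))))
    (hfhatbc : ∀ n < N,
      pev (fhat n) (xp n) = f (w (nodeMinus N xp uh n) (nodePlus N xp uh n))) :
    -- continuity on the periodic interval
    (∀ n < N, nodeMinus N xp fhat n = nodePlus N xp fhat n) ∧
    -- right endpoint values
    (∀ n < N, pev (fhat n) (xp (n + 1)) =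
      f (w (pev (uh n) (xp (n + 1))) (nodePlus N xp uh (n + 1)))) ∧
    -- orthogonality to 𝕍_{p-1}
    (∀ φ : ℕ → Fin d → Polynomial ℝ, (∀ n i, (φ n i).degree < (p : ℕ)) →
      (∑ n ∈ Finset.range N, ∫ x in xp n..xp (n + 1),
        dotR (pev (fhat n) x - f (pev (uh n) x)) (pev (φ n) x)) = 0) := by
  classical
  have key := key_identity d N hN p hp xp hxmono U hUopen f hf w uh huhU fhat hfhatdef hfhatbc
  have hzdeg : ∀ n i, ((fun (_ : ℕ) (_ : Fin d) => (0 : Polynomial ℝ)) n i).degree < (p : ℕ) := by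
    intro n i
    simp only [Polynomial.degree_zero]
    exact WithBot.bot_lt_coe _
  -- right endpoint values
  have concl2 : ∀ n < N, pev (fhat n) (xp (n + 1)) =
      f (w (pev (uh n) (xp (n + 1))) (nodePlus N xp uh (n + 1))) := by
    intro n0 hn0
    have hkey := key (fun _ _ => 0) hzdeg
      (fun m => if m = n0 then
        pev (fhat n0) (xp (n0 + 1))
          - f (w (pev (uh n0) (xp (n0 + 1))) (nodePlus N xp uh (n0 + 1))) else 0)
    have hRHS : (∑ n ∈ Finset.range N, ∫ x in xp n..xp (n + 1),
        dotR (pev (fhat n) x - f (pev (uh n) x))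
          (pev ((fun (_ : ℕ) (_ : Fin d) => (0 : Polynomial ℝ)) n) x)) = 0 := by
      refine Finset.sum_eq_zero fun n _ => ?_
      simp [dotR, pev]
    rw [hRHS] at hkey
    rw [Finset.sum_eq_single_of_mem n0 (Finset.mem_range.mpr hn0)
      (fun m _ hm => by simp [if_neg hm, dotR])] at hkey
    simp only [if_pos rfl] at hkey
    have h0 := eq_zero_of_dotR_self hkey
    exact sub_eq_zero.mp h0
  refine ⟨?_, concl2, ?_⟩
  · -- continuity
    intro n hn
    rw [nodeMinus_eq N hN xp fhat n hn, nodePlus_eq N xp fhat n hn, hfhatbc n hn,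
      concl2 (predN N n) (predN_lt hN hn), nodeMinus_eq N hN xp uh n hn,
      nodePlus_predN_succ N hN xp uh n hn, nodePlus_eq N xp uh n hn]
  · -- orthogonality
    intro φ hφdeg
    have hkey := key φ hφdeg (fun _ => 0)
    have hLHS : (∑ n ∈ Finset.range N,
        dotR (pev (fhat n) (xp (n + 1))
          - f (w (pev (uh n) (xp (n + 1))) (nodePlus N xp uh (n + 1))))
          ((fun (_ : ℕ) => (0 : Fin d → ℝ)) n)) = 0 := by
      refine Finset.sum_eq_zero fun n _ => ?_
      simp [dotR]
    rw [hLHS] at hkey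
    exact hkey.symm
end

section
/- Let d ≥ 1, p ≥ 0, and let I_n = [x_n, x_{n+1}] with h_n := x_{n+1} − x_n > 0. Let v : I_n → ℝ^d have all components polynomial of degree ≤ p+1 and suppose ∫_{I_n} v(x) · φ(x) dx = 0 for every ℝ^d-valued φ whose components are polynomials of degree ≤ p−1. Then v(x) = α l_p^n(x) + β l_{p+1}^n(x) for all x ∈ I_n, where the coefficient vectors are α = ½( (−1)^p v(x_n) + v(x_{n+1}) ) and β = ½( (−1)^{p+1} v(x_n) + v(x_{n+1}) ). -/
open Polynomial MeasureTheory intervalIntegral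

noncomputable def ip (q s : Polynomial ℝ) : ℝ := ∫ x in (-1:ℝ)..1, q.eval x * s.eval x

lemma ip_integrable (q s : Polynomial ℝ) (a b : ℝ) :
    IntervalIntegrable (fun x => q.eval x * s.eval x) volume a b :=
  (q.continuous.mul s.continuous).intervalIntegrable _ _

lemma ip_comm (q s : Polynomial ℝ) : ip q s = ip s q := by
  unfold ip; simp [mul_comm]

lemma ip_sub_left (q s t : Polynomial ℝ) : ip (q - s) t = ip q t - ip s t := by
  unfold ip
  rw [← intervalIntegral.integral_sub (ip_integrable q t _ _) (ip_integrable s t _ _)]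
  simp [sub_mul]

lemma ip_add_left (q s t : Polynomial ℝ) : ip (q + s) t = ip q t + ip s t := by
  unfold ip
  rw [← intervalIntegral.integral_add (ip_integrable q t _ _) (ip_integrable s t _ _)]
  simp [add_mul]

lemma ip_Cmul_left (a : ℝ) (q t : Polynomial ℝ) : ip (Polynomial.C a * q) t = a * ip q t := by
  unfold ip
  rw [← intervalIntegral.integral_const_mul]
  simp [mul_assoc]

lemma ip_smul_left (a : ℝ) (q t : Polynomial ℝ) : ip (a • q) t = a * ip q t := by
  rw [Polynomial.smul_eq_C_mul, ip_Cmul_left]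

lemma poly_zero_of_ip_self (r : Polynomial ℝ) (hz : ip r r = 0) : r = 0 := by
  by_contra hr
  have hle : (-1:ℝ) ≤ 1 := by norm_num
  have hae := (intervalIntegral.integral_eq_zero_iff_of_le_of_nonneg_ae hle
    (Filter.Eventually.of_forall fun x => mul_self_nonneg _) (ip_integrable r r _ _)).mp hz
  have hroots : ∀ᵐ x ∂(volume : Measure ℝ), ¬ r.IsRoot x :=
    measure_eq_zero_iff_ae_notMem.mp ((Polynomial.finite_setOf_isRoot hr).measure_zero _)
  have hfalse : ∀ᵐ x ∂(volume.restrict (Set.Ioc (-1:ℝ) 1)), False := by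
    filter_upwards [hae, MeasureTheory.ae_restrict_of_ae hroots] with x h1 h2
    exact h2 (mul_self_eq_zero.mp h1)
  rw [MeasureTheory.ae_iff] at hfalse
  simp only [not_false_eq_true, Set.setOf_true] at hfalse
  rw [Measure.restrict_apply_univ, Real.volume_Ioc] at hfalse
  norm_num at hfalse

section Main

variable (l : ℕ → Polynomial ℝ)

lemma mem_span_aux (hdeg : ∀ k, (l k).natDegree = k) (hnz : ∀ k, l k ≠ 0) :
    ∀ (n k : ℕ) (q : Polynomial ℝ), q.natDegree ≤ n → q.degree < (k : ℕ) →
      q ∈ Submodule.span ℝ (l '' Set.Iio k) := by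
  intro n
  induction n using Nat.strong_induction_on with
  | _ n ih =>
    intro k q hqn hqk
    by_cases hq : q = 0
    · simp [hq]
    have hm : q.natDegree < k := (Polynomial.natDegree_lt_iff_degree_lt hq).mpr hqk
    set m := q.natDegree with hmdef
    have hlc : (l m).leadingCoeff ≠ 0 := Polynomial.leadingCoeff_ne_zero.mpr (hnz m)
    set c := q.leadingCoeff / (l m).leadingCoeff with hc
    have hc0 : c ≠ 0 := div_ne_zero (Polynomial.leadingCoeff_ne_zero.mpr hq) hlc
    have hmem : Polynomial.C c * l m ∈ Submodule.span ℝ (l '' Set.Iio k) := by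
      rw [← Polynomial.smul_eq_C_mul]
      exact Submodule.smul_mem _ _ (Submodule.subset_span ⟨m, hm, rfl⟩)
    have hdegeq : q.degree = (Polynomial.C c * l m).degree := by
      rw [Polynomial.degree_C_mul hc0, Polynomial.degree_eq_natDegree (hnz m),
        Polynomial.degree_eq_natDegree hq, hdeg m]
    have hlceq : q.leadingCoeff = (Polynomial.C c * l m).leadingCoeff := by
      rw [Polynomial.leadingCoeff_mul, Polynomial.leadingCoeff_C]
      rw [hc, div_mul_cancel₀ _ hlc]
    have hsub : (q - Polynomial.C c * l m).degree < q.degree :=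
      Polynomial.degree_sub_lt hdegeq hq hlceq
    set q' := q - Polynomial.C c * l m with hq'def
    by_cases hq' : q' = 0
    · have : q = Polynomial.C c * l m := by
        have := sub_eq_zero.mp hq'
        exact this
      rw [this]; exact hmem
    have hlt : q'.natDegree < q.natDegree := Polynomial.natDegree_lt_natDegree hq' hsub
    have hq'span : q' ∈ Submodule.span ℝ (l '' Set.Iio k) :=
      ih q'.natDegree (lt_of_lt_of_le hlt hqn) k q' le_rfl (lt_trans hsub hqk)
    have : q = q' + Polynomial.C c * l m := by ring
    rw [this]
    exact Submodule.add_mem _ hq'span hmem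

lemma ip_eq_zero_of_lt (hdeg : ∀ k, (l k).natDegree = k) (hnz : ∀ k, l k ≠ 0)
    (k : ℕ) (r : Polynomial ℝ)
    (h : ∀ j < k, ip (l j) r = 0)
    (q : Polynomial ℝ) (hq : q.degree < (k : ℕ)) : ip q r = 0 := by
  have main : ∀ s ∈ Submodule.span ℝ (l '' Set.Iio k), ip s r = 0 := by
    intro s hmem
    induction hmem using Submodule.span_induction with
    | mem x hx =>
      obtain ⟨j, hj, rfl⟩ := hx
      exact h j hj
    | zero => unfold ip; simp
    | add x y hx hy px py => rw [ip_add_left, px, py, add_zero]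
    | smul a x hx px => rw [ip_smul_left, px, mul_zero]
  exact main q (mem_span_aux l hdeg hnz q.natDegree k q le_rfl hq)

lemma eval_neg_one (hdeg : ∀ k, (l k).natDegree = k)
    (horth : ∀ j k, j ≠ k → ∫ x in (-1:ℝ)..1, (l j).eval x * (l k).eval x = 0)
    (hnorm : ∀ k, (l k).eval 1 = 1) (k : ℕ) :
    (l k).eval (-1) = (-1 : ℝ) ^ k := by
  have hnz : ∀ k, l k ≠ 0 := fun k h => by simpa [h] using hnorm k
  set m : Polynomial ℝ := (l k).comp (-Polynomial.X) with hm
  have hXdeg : (-Polynomial.X : Polynomial ℝ).natDegree = 1 := by simp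
  have hmdeg : m.natDegree = k := by
    rw [hm, Polynomial.natDegree_comp, hXdeg, mul_one, hdeg]
  have hmeval : ∀ x : ℝ, m.eval x = (l k).eval (-x) := by
    intro x; rw [hm, Polynomial.eval_comp]; simp
  have hm0 : m ≠ 0 := by
    intro h
    have : m.eval (-1) = 0 := by rw [h]; simp
    rw [hmeval] at this
    simp [hnorm k] at this
  have hmlc : m.leadingCoeff = (l k).leadingCoeff * (-1) ^ k := by
    rw [hm, Polynomial.leadingCoeff_comp (by rw [hXdeg]; norm_num), hdeg]
    congr 1
    simp [Polynomial.leadingCoeff]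
  -- orthogonality of m to l j for j < k
  have orth_m : ∀ j < k, ip (l j) m = 0 := by
    intro j hj
    have key : ip ((l j).comp (-Polynomial.X)) (l k) = 0 := by
      apply ip_eq_zero_of_lt l hdeg hnz k
      · intro j' hj'
        exact horth j' k (Nat.ne_of_lt hj')
      · calc ((l j).comp (-Polynomial.X)).degree
            ≤ (((l j).comp (-Polynomial.X)).natDegree : WithBot ℕ) :=
              Polynomial.degree_le_natDegree
          _ < (k : WithBot ℕ) := by
              rw [Polynomial.natDegree_comp, hXdeg, mul_one, hdeg]
              exact_mod_cast hj
    unfold ip at key ⊢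
    have e1 : (∫ x in (-1:ℝ)..1, (l j).eval x * m.eval x)
        = ∫ x in (-1:ℝ)..1, (fun y => (l j).eval (-y) * (l k).eval y) (-x) := by
      apply intervalIntegral.integral_congr
      intro x _
      simp [hmeval x]
    rw [e1, intervalIntegral.integral_comp_neg (fun y => (l j).eval (-y) * (l k).eval y)]
    rw [← key]
    have hb1 : -(1:ℝ) = -1 := rfl
    rw [show -(-1:ℝ) = 1 by norm_num]
    apply intervalIntegral.integral_congr
    intro x _
    simp
  -- m is orthogonal to everything of degree < k
  set r : Polynomial ℝ := m - Polynomial.C ((-1:ℝ)^k) * l k with hr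
  have hCne : ((-1:ℝ)^k) ≠ 0 := by positivity
  have hdm : m.degree = (Polynomial.C ((-1:ℝ)^k) * l k).degree := by
    rw [Polynomial.degree_C_mul hCne, Polynomial.degree_eq_natDegree hm0,
      Polynomial.degree_eq_natDegree (hnz k), hmdeg, hdeg]
  have hlcm : m.leadingCoeff = (Polynomial.C ((-1:ℝ)^k) * l k).leadingCoeff := by
    rw [Polynomial.leadingCoeff_mul, Polynomial.leadingCoeff_C, hmlc, mul_comm]
  have hrdeg : r.degree < (k : ℕ) := by
    have := Polynomial.degree_sub_lt hdm hm0 hlcm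
    rw [← hr] at this
    calc r.degree < m.degree := this
      _ = (k : ℕ) := by rw [Polynomial.degree_eq_natDegree hm0, hmdeg]
  have hr0 : r = 0 := by
    apply poly_zero_of_ip_self
    have h1 : ip r m = 0 := ip_eq_zero_of_lt l hdeg hnz k m orth_m r hrdeg
    have h2 : ip r (l k) = 0 :=
      ip_eq_zero_of_lt l hdeg hnz k (l k)
        (fun j hj => horth j k (Nat.ne_of_lt hj)) r hrdeg
    have : ip r r = ip r m - (-1:ℝ)^k * ip r (l k) := by
      rw [hr]
      nth_rewrite 1 [ip_comm]
      rw [ip_sub_left, ip_Cmul_left, ip_comm m r, ip_comm (l k) r]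
    rw [this, h1, h2, mul_zero, sub_zero]
  have hmeq : m = Polynomial.C ((-1:ℝ)^k) * l k := by
    have := sub_eq_zero.mp hr0
    exact this
  have := congrArg (Polynomial.eval (1:ℝ)) hmeq
  rw [hmeval 1] at this
  simpa [hnorm k] using this

lemma core_repr (hdeg : ∀ k, (l k).natDegree = k)
    (horth : ∀ j k, j ≠ k → ∫ x in (-1:ℝ)..1, (l j).eval x * (l k).eval x = 0)
    (hnorm : ∀ k, (l k).eval 1 = 1) (p : ℕ) (u : Polynomial ℝ)
    (hu : u.natDegree ≤ p + 1)
    (hor : ∀ ψ : Polynomial ℝ, ψ.degree < (p : ℕ) → ip u ψ = 0) :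
    ∃ a b : ℝ, u = Polynomial.C a * l p + Polynomial.C b * l (p+1) := by
  have hnz : ∀ k, l k ≠ 0 := fun k h => by simpa [h] using hnorm k
  have horthip : ∀ j k, j ≠ k → ip (l j) (l k) = 0 := horth
  have hself : ∀ k, ip (l k) (l k) ≠ 0 := by
    intro k h
    exact hnz k (poly_zero_of_ip_self _ h)
  set a := ip (l p) u / ip (l p) (l p) with ha
  set b := ip (l (p+1)) u / ip (l (p+1)) (l (p+1)) with hb
  refine ⟨a, b, ?_⟩
  set r := u - (Polynomial.C a * l p + Polynomial.C b * l (p+1)) with hrdef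
  have key : ∀ j < p + 2, ip (l j) r = 0 := by
    intro j hj
    have expand : ip (l j) r
        = ip (l j) u - (a * ip (l j) (l p) + b * ip (l j) (l (p+1))) := by
      rw [hrdef, ip_comm]
      rw [ip_sub_left, ip_add_left, ip_Cmul_left, ip_Cmul_left,
        ip_comm u (l j), ip_comm (l p) (l j), ip_comm (l (p+1)) (l j)]
    rcases lt_trichotomy j p with h | h | h
    · have h1 : ip (l j) u = 0 := by
        rw [ip_comm]
        apply hor
        calc (l j).degree ≤ ((l j).natDegree : WithBot ℕ) := Polynomial.degree_le_natDegree
          _ < (p : WithBot ℕ) := by rw [hdeg]; exact_mod_cast h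
      rw [expand, h1, horthip j p (Nat.ne_of_lt h),
        horthip j (p+1) (by omega), mul_zero, mul_zero, add_zero, sub_zero]
    · subst h
      rw [expand, horthip j (j+1) (by omega), mul_zero, add_zero, ha,
        div_mul_cancel₀ _ (hself j), sub_self]
    · have h' : j = p + 1 := by omega
      subst h'
      rw [expand, horthip (p+1) p (by omega), mul_zero, zero_add, hb,
        div_mul_cancel₀ _ (hself (p+1)), sub_self]
  have hrd : r.degree < ((p + 2 : ℕ) : WithBot ℕ) := by
    have h1 : u.degree < ((p + 2 : ℕ) : WithBot ℕ) :=
      lt_of_le_of_lt Polynomial.degree_le_natDegree (by exact_mod_cast Nat.lt_succ_of_le hu)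
    have h2 : (Polynomial.C a * l p).degree < ((p + 2 : ℕ) : WithBot ℕ) := by
      calc (Polynomial.C a * l p).degree
          ≤ ((Polynomial.C a * l p).natDegree : WithBot ℕ) := Polynomial.degree_le_natDegree
        _ ≤ ((l p).natDegree : WithBot ℕ) := by
            exact_mod_cast Polynomial.natDegree_C_mul_le a (l p)
        _ < ((p + 2 : ℕ) : WithBot ℕ) := by rw [hdeg]; exact_mod_cast by omega
    have h3 : (Polynomial.C b * l (p+1)).degree < ((p + 2 : ℕ) : WithBot ℕ) := by
      calc (Polynomial.C b * l (p+1)).degree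
          ≤ ((Polynomial.C b * l (p+1)).natDegree : WithBot ℕ) := Polynomial.degree_le_natDegree
        _ ≤ ((l (p+1)).natDegree : WithBot ℕ) := by
            exact_mod_cast Polynomial.natDegree_C_mul_le b (l (p+1))
        _ < ((p + 2 : ℕ) : WithBot ℕ) := by rw [hdeg]; exact_mod_cast by omega
    calc r.degree ≤ max u.degree (Polynomial.C a * l p + Polynomial.C b * l (p+1)).degree :=
          Polynomial.degree_sub_le _ _
      _ < ((p + 2 : ℕ) : WithBot ℕ) := by
          apply max_lt h1
          exact lt_of_le_of_lt (Polynomial.degree_add_le _ _) (max_lt h2 h3)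
  have hr0 : r = 0 := poly_zero_of_ip_self r
    (ip_eq_zero_of_lt l hdeg hnz (p+2) r key r hrd)
  exact sub_eq_zero.mp hr0

end Main

/-- **Legendre representation of an almost-orthogonal cell polynomial** (the formula
underlying (5.17) of the paper): an `ℝ^d`-valued polynomial `v` of degree `≤ p+1` on the
cell `I_n = [x_n, x_{n+1}]` that is `L₂(I_n)`-orthogonal to all polynomials of degree
`≤ p-1` equals `α l_p^n + β l_{p+1}^n` with `α = ½((-1)^p v(x_n) + v(x_{n+1}))` and
`β = ½((-1)^{p+1} v(x_n) + v(x_{n+1}))`. Here `l k` is characterized as the `k`-th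
Legendre polynomial on `(-1,1)` normalized by `l_k(1) = 1`, and "degree ≤ p-1" is
expressed as `degree < p`. -/
theorem cell_orthogonal_legendre_representation
    (l : ℕ → Polynomial ℝ)
    (hdeg : ∀ k, (l k).natDegree = k)
    (horth : ∀ j k, j ≠ k → ∫ x in (-1:ℝ)..1, (l j).eval x * (l k).eval x = 0)
    (hnorm : ∀ k, (l k).eval 1 = 1)
    (d : ℕ) (hd : 1 ≤ d) (p : ℕ)
    (xn xnp : ℝ) (hx : xn < xnp)
    (V : Fin d → Polynomial ℝ) (hV : ∀ i, (V i).natDegree ≤ p + 1)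
    (horthV : ∀ φ : Fin d → Polynomial ℝ, (∀ i, (φ i).degree < (p : ℕ)) →
      (∫ x in xn..xnp, ∑ i, (V i).eval x * (φ i).eval x) = 0) :
    ∀ x ∈ Set.Icc xn xnp, ∀ i,
      (V i).eval x =
        (1/2 * ((-1 : ℝ) ^ p * (V i).eval xn + (V i).eval xnp)) *
          (l p).eval (2 * ((x - xn) / (xnp - xn)) - 1) +
        (1/2 * ((-1 : ℝ) ^ (p + 1) * (V i).eval xn + (V i).eval xnp)) *
          (l (p + 1)).eval (2 * ((x - xn) / (xnp - xn)) - 1) := by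
  intro x hxmem i
  have hh0 : xnp - xn ≠ 0 := sub_ne_zero.mpr hx.ne'
  have hc0 : (2 / (xnp - xn) : ℝ) ≠ 0 := by positivity
  -- the affine maps between [xn, xnp] and [-1, 1], as polynomials
  set τp : Polynomial ℝ := Polynomial.C ((xnp - xn)/2) * Polynomial.X
      + Polynomial.C (xn + (xnp - xn)/2) with hτdef
  set σp : Polynomial ℝ := Polynomial.C (2/(xnp - xn)) * Polynomial.X
      + Polynomial.C (-(2*xn/(xnp - xn)) - 1) with hσdef
  have hτeval : ∀ t : ℝ, τp.eval t = xn + (t + 1) * ((xnp - xn)/2) := by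
    intro t; simp [hτdef]; ring
  have hσeval : ∀ y : ℝ, σp.eval y = 2 * ((y - xn) / (xnp - xn)) - 1 := by
    intro y; simp [hσdef]; field_simp; ring
  have hτσ : ∀ y : ℝ, τp.eval (σp.eval y) = y := by
    intro y; rw [hσeval, hτeval]; field_simp; ring
  have hτdeg : τp.natDegree = 1 := by
    rw [hτdef]; exact Polynomial.natDegree_linear (by positivity)
  have hσdeg : σp.natDegree = 1 := by
    rw [hσdef]; exact Polynomial.natDegree_linear hc0
  set u : Polynomial ℝ := (V i).comp τp with hudef
  have hueval : ∀ y : ℝ, u.eval (σp.eval y) = (V i).eval y := by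
    intro y; rw [hudef, Polynomial.eval_comp, hτσ]
  have hudeg : u.natDegree ≤ p + 1 := by
    rw [hudef, Polynomial.natDegree_comp, hτdeg, mul_one]; exact hV i
  -- orthogonality on the reference interval
  have hor : ∀ ψ : Polynomial ℝ, ψ.degree < (p : ℕ) → ip u ψ = 0 := by
    intro ψ hψ
    set φi : Polynomial ℝ := ψ.comp σp with hφidef
    have hφideg : φi.degree < (p : ℕ) := by
      rcases eq_or_ne ψ 0 with h0 | h0
      · rw [hφidef, h0, Polynomial.zero_comp, Polynomial.degree_zero]
        exact WithBot.bot_lt_coe p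
      · calc φi.degree ≤ (φi.natDegree : WithBot ℕ) := Polynomial.degree_le_natDegree
          _ ≤ (ψ.natDegree : WithBot ℕ) := by
              rw [hφidef]
              exact_mod_cast le_trans Polynomial.natDegree_comp_le
                (by rw [hσdeg, mul_one])
          _ < (p : WithBot ℕ) := by
              exact_mod_cast (Polynomial.natDegree_lt_iff_degree_lt h0).mpr hψ
    set φ : Fin d → Polynomial ℝ := fun j => if j = i then φi else 0 with hφdef
    have h0 := horthV φ (by
      intro j
      by_cases hji : j = i
      · simpa [hφdef, hji] using hφideg
      · simp only [hφdef, if_neg hji, Polynomial.degree_zero]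
        exact WithBot.bot_lt_coe p)
    have hsum : ∀ y : ℝ, (∑ j, (V j).eval y * (φ j).eval y)
        = (fun t => u.eval t * ψ.eval t) (2/(xnp - xn) * y + (-(2*xn/(xnp - xn)) - 1)) := by
      intro y
      have e1 : (∑ j, (V j).eval y * (φ j).eval y) = (V i).eval y * φi.eval y := by
        rw [Finset.sum_eq_single i]
        · simp [hφdef]
        · intro j _ hji; simp [hφdef, if_neg hji]
        · intro hi; exact absurd (Finset.mem_univ i) hi
      have e2 : 2/(xnp - xn) * y + (-(2*xn/(xnp - xn)) - 1) = σp.eval y := by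
        rw [hσeval]; field_simp; ring
      rw [e1, e2]
      simp only
      rw [hueval y, hφidef, Polynomial.eval_comp]
    rw [intervalIntegral.integral_congr (fun y _ => hsum y),
      intervalIntegral.integral_comp_mul_add (fun t => u.eval t * ψ.eval t) hc0] at h0
    have eb1 : 2/(xnp - xn) * xn + (-(2*xn/(xnp - xn)) - 1) = -1 := by field_simp; ring
    have eb2 : 2/(xnp - xn) * xnp + (-(2*xn/(xnp - xn)) - 1) = 1 := by field_simp; ring
    rw [eb1, eb2, smul_eq_mul, mul_eq_zero] at h0
    rcases h0 with h0 | h0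
    · exact absurd h0 (inv_ne_zero hc0)
    · exact h0
  obtain ⟨a, b, hab⟩ := core_repr l hdeg horth hnorm p u hudeg hor
  -- endpoint values
  have hτ1 : τp.eval 1 = xnp := by rw [hτeval]; ring
  have hτm1 : τp.eval (-1) = xn := by rw [hτeval]; ring
  have hVnp : (V i).eval xnp = a + b := by
    have := congrArg (Polynomial.eval (1:ℝ)) hab
    rw [hudef, Polynomial.eval_comp, hτ1] at this
    simpa [hnorm p, hnorm (p+1)] using this
  have hVn : (V i).eval xn = a * (-1:ℝ)^p + b * (-1:ℝ)^(p+1) := by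
    have := congrArg (Polynomial.eval (-1:ℝ)) hab
    rw [hudef, Polynomial.eval_comp, hτm1] at this
    simpa [eval_neg_one l hdeg horth hnorm p, eval_neg_one l hdeg horth hnorm (p+1)]
      using this
  have hsq : ((-1:ℝ)^p) * ((-1:ℝ)^p) = 1 := by
    rw [← pow_add, ← two_mul, pow_mul]; norm_num
  have hs : ((-1:ℝ)^(p+1)) = -((-1:ℝ)^p) := by rw [pow_succ]; ring
  have hA : 1/2 * ((-1:ℝ)^p * (V i).eval xn + (V i).eval xnp) = a := by
    rw [hVn, hVnp, hs]; linear_combination (1/2*(a - b)) * hsq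
  have hB : 1/2 * ((-1:ℝ)^(p+1) * (V i).eval xn + (V i).eval xnp) = b := by
    rw [hVn, hVnp, hs]; linear_combination (1/2*(b - a)) * hsq
  rw [hA, hB]
  have hE : τp.eval (2 * ((x - xn) / (xnp - xn)) - 1) = x := by
    rw [← hσeval x]; exact hτσ x
  have : (V i).eval x = u.eval (2 * ((x - xn) / (xnp - xn)) - 1) := by
    rw [hudef, Polynomial.eval_comp, hE]
  rw [this, hab]
  simp [Polynomial.eval_add, Polynomial.eval_mul]
end

section
/- Let d ≥ 1, p ≥ 0, and let I_n = [x_n, x_{n+1}] with h_n := x_{n+1} − x_n > 0. Let v : I_n → ℝ^d have all components polynomial of degree ≤ p+1 and suppose ∫_{I_n} v(x) · φ(x) dx = 0 for every ℝ^d-valued φ whose components are polynomials of degree ≤ p−1. Then ‖v‖²_{L₂(I_n)} ≤ h_n ( |v(x_n)|² + |v(x_{n+1})|² ), where |·| denotes the Euclidean norm on ℝ^d. -/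
open Polynomial MeasureTheory intervalIntegral Finset

namespace CellBound

variable {a b : ℝ}

/-- interval integrability of a polynomial -/
lemma pii (P : ℝ[X]) (a b : ℝ) : IntervalIntegrable (fun x => P.eval x) volume a b :=
  P.continuous.intervalIntegrable a b

lemma pii2 (P Q : ℝ[X]) (a b : ℝ) :
    IntervalIntegrable (fun x => P.eval x * Q.eval x) volume a b :=
  (P.continuous.mul Q.continuous).intervalIntegrable a b

/-- polynomial FTC -/
lemma pint (P : ℝ[X]) (a b : ℝ) :
    (∫ x in a..b, (derivative P).eval x) = P.eval b - P.eval a := by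
  apply integral_deriv_eq_sub' (fun x => P.eval x)
  · funext x; exact (P.hasDerivAt x).deriv
  · exact fun x _ => P.differentiableAt
  · exact (derivative P).continuous.continuousOn

/-- integration by parts for polynomials with vanishing boundary factor -/
lemma ibp (g χ : ℝ[X]) (hga : g.eval a = 0) (hgb : g.eval b = 0) :
    (∫ x in a..b, (derivative g).eval x * χ.eval x)
      = - ∫ x in a..b, g.eval x * (derivative χ).eval x := by
  have h1 : (∫ x in a..b, (derivative (g * χ)).eval x) = 0 := by
    rw [pint]; simp [hga, hgb]
  have h2 : (∫ x in a..b, (derivative (g * χ)).eval x)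
      = (∫ x in a..b, (derivative g).eval x * χ.eval x)
        + ∫ x in a..b, g.eval x * (derivative χ).eval x := by
    rw [← integral_add (pii2 _ _ _ _) (pii2 _ _ _ _)]
    congr 1; funext x
    rw [derivative_mul, eval_add, eval_mul, eval_mul]
  linarith [h1, h2]


noncomputable def ff (a b : ℝ) (k : ℕ) : ℝ[X] := ((X - C a) * (X - C b)) ^ k

noncomputable def RR (a b : ℝ) (k : ℕ) : ℝ[X] := derivative^[k] (ff a b k)

lemma ff_monic (a b : ℝ) (k : ℕ) : (ff a b k).Monic :=
  ((monic_X_sub_C a).mul (monic_X_sub_C b)).pow k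

lemma ff_natDegree (a b : ℝ) (k : ℕ) : (ff a b k).natDegree = 2 * k := by
  rw [ff, natDegree_pow, natDegree_mul (X_sub_C_ne_zero a) (X_sub_C_ne_zero b),
    natDegree_X_sub_C, natDegree_X_sub_C]
  ring

lemma eval_iter_deriv_ff_a {j k : ℕ} (hj : j < k) :
    (derivative^[j] (ff a b k)).eval a = 0 := by
  rw [ff, mul_pow, iterate_derivative_mul]
  rw [eval_finset_sum]
  apply Finset.sum_eq_zero
  intro i hi
  rw [iterate_derivative_X_sub_pow, eval_smul, eval_mul, eval_smul, eval_pow, eval_sub,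
    eval_X, eval_C, sub_self, zero_pow, smul_zero, zero_mul, smul_zero]
  have : j - i ≤ j := Nat.sub_le _ _
  omega

lemma eval_iter_deriv_ff_b {j k : ℕ} (hj : j < k) :
    (derivative^[j] (ff a b k)).eval b = 0 := by
  rw [ff, mul_pow, iterate_derivative_mul]
  rw [eval_finset_sum]
  apply Finset.sum_eq_zero
  intro i hi
  rw [iterate_derivative_X_sub_pow (c := b), eval_smul, eval_mul, eval_smul, eval_pow, eval_sub,
    eval_X, eval_C, sub_self, zero_pow, smul_zero, mul_zero, smul_zero]
  simp only [Finset.mem_range] at hi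
  omega


lemma ibp_iter (k : ℕ) (ψ : ℝ[X]) :
    ∀ j, j ≤ k → (∫ x in a..b, (RR a b k).eval x * ψ.eval x)
      = (-1 : ℝ) ^ j * ∫ x in a..b,
          (derivative^[k - j] (ff a b k)).eval x * (derivative^[j] ψ).eval x := by
  intro j
  induction j with
  | zero => intro _; simp [RR]
  | succ j ih =>
    intro hj
    rw [ih (le_of_lt (Nat.lt_of_succ_le hj))]
    have hlt : k - j - 1 < k := by omega
    have hstep : (∫ x in a..b,
        (derivative^[k - j] (ff a b k)).eval x * (derivative^[j] ψ).eval x)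
        = - ∫ x in a..b,
            (derivative^[k - (j + 1)] (ff a b k)).eval x * (derivative^[j + 1] ψ).eval x := by
      have h1 : derivative^[k - j] (ff a b k)
          = derivative (derivative^[k - (j + 1)] (ff a b k)) := by
        rw [← Function.iterate_succ_apply' derivative]
        congr 1
        omega
      rw [h1, ibp _ _ (eval_iter_deriv_ff_a (by omega)) (eval_iter_deriv_ff_b (by omega)),
        ← Function.iterate_succ_apply' derivative]
    rw [hstep]
    ring

lemma natDegree_RR (a b : ℝ) (k : ℕ) : (RR a b k).natDegree ≤ k := by
  have := natDegree_iterate_derivative (ff a b k) k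
  rw [ff_natDegree] at this
  rw [RR]
  omega

/-- orthogonality of `RR a b k` to polynomials of degree `< k`. -/
lemma orth_RR {k : ℕ} {ψ : ℝ[X]} (hψ : ψ.degree < (k : ℕ)) :
    (∫ x in a..b, (RR a b k).eval x * ψ.eval x) = 0 := by
  rcases eq_or_ne ψ 0 with rfl | hne
  · simp
  · have hnd : ψ.natDegree < k := natDegree_lt_iff_degree_lt hne |>.mpr hψ
    have := ibp_iter (a := a) (b := b) k ψ k le_rfl
    rw [iterate_derivative_eq_zero hnd] at this
    simpa using this

lemma iter_deriv_ff_top (a b : ℝ) (k : ℕ) :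
    derivative^[2 * k] (ff a b k) = C (((2 * k).factorial : ℝ)) := by
  have hnd : (derivative^[2 * k] (ff a b k)).natDegree ≤ 0 := by
    have := natDegree_iterate_derivative (ff a b k) (2 * k)
    rw [ff_natDegree] at this
    omega
  rw [eq_C_of_natDegree_le_zero hnd, coeff_iterate_derivative]
  congr 1
  rw [zero_add, Nat.descFactorial_self]
  have h1 : (ff a b k).coeff (2 * k) = 1 := by
    have := (ff_monic a b k).coeff_natDegree
    rwa [ff_natDegree] at this
  rw [h1]
  simp

lemma eval_RR_b (k : ℕ) : (RR a b k).eval b = (k.factorial : ℝ) * (b - a) ^ k := by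
  rw [RR, ff, mul_pow, iterate_derivative_mul, eval_finset_sum]
  rw [Finset.sum_eq_single k]
  · rw [Nat.choose_self, one_smul, eval_mul, Nat.sub_self, Function.iterate_zero_apply,
      iterate_derivative_X_sub_pow_self, eval_pow, eval_sub, eval_X, eval_C, eval_natCast]
    ring
  · intro i hi hik
    rw [iterate_derivative_X_sub_pow (c := b), eval_smul, eval_mul, eval_smul, eval_pow,
      eval_sub, eval_X, eval_C, sub_self, zero_pow, smul_zero, mul_zero, smul_zero]
    simp only [Finset.mem_range] at hi
    omega
  · intro h
    exact absurd (Finset.self_mem_range_succ k) h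


lemma eval_RR_a (k : ℕ) : (RR a b k).eval a = (k.factorial : ℝ) * (a - b) ^ k := by
  rw [RR, ff, mul_pow, iterate_derivative_mul, eval_finset_sum]
  rw [Finset.sum_eq_single 0]
  · rw [Nat.choose_zero_right, one_smul, eval_mul, Nat.sub_zero, Function.iterate_zero_apply,
      iterate_derivative_X_sub_pow_self, eval_natCast, eval_pow, eval_sub, eval_X, eval_C]
  · intro i hi hi0
    rw [iterate_derivative_X_sub_pow (c := a), eval_smul, eval_mul, eval_smul, eval_pow,
      eval_sub, eval_X, eval_C, sub_self, zero_pow, smul_zero, zero_mul, smul_zero]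
    simp only [Finset.mem_range] at hi
    omega
  · intro h
    exact absurd (Finset.mem_range.mpr (Nat.succ_pos k)) h

lemma coeff_RR (a b : ℝ) (k : ℕ) :
    (RR a b k).coeff k = ((2 * k).descFactorial k : ℝ) := by
  rw [RR, coeff_iterate_derivative]
  have h1 : (ff a b k).coeff (k + k) = 1 := by
    have h2 := (ff_monic a b k).coeff_natDegree
    rw [ff_natDegree] at h2
    rw [show k + k = 2 * k by ring, h2]
  rw [h1, show k + k = 2 * k by ring]
  simp

lemma coeff_RR_ne_zero (a b : ℝ) (k : ℕ) : (RR a b k).coeff k ≠ 0 := by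
  rw [coeff_RR]
  have : (2 * k).descFactorial k ≠ 0 := by
    rw [Ne, Nat.descFactorial_eq_zero_iff_lt]
    omega
  exact_mod_cast this

lemma fact_bound (k : ℕ) : ((2 * k).factorial : ℝ) ≤ 4 ^ k * ((k.factorial : ℝ) * k.factorial) := by
  have h1 : (2 * k).choose k * k.factorial * (2 * k - k).factorial = (2 * k).factorial :=
    Nat.choose_mul_factorial_mul_factorial (show k ≤ 2 * k by omega)
  have h2 : (2 * k).choose k ≤ 2 ^ (2 * k) := by
    calc (2 * k).choose k ≤ ∑ i ∈ Finset.range (2 * k + 1), (2 * k).choose i :=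
          Finset.single_le_sum (fun i _ => Nat.zero_le _)
            (Finset.mem_range.mpr (by omega))
      _ = 2 ^ (2 * k) := Nat.sum_range_choose (2 * k)
  have h3 : (2 : ℕ) ^ (2 * k) = 4 ^ k := by
    rw [pow_mul]; norm_num
  have h4 : (2 * k).factorial ≤ 4 ^ k * (k.factorial * k.factorial) := by
    calc (2 * k).factorial = (2 * k).choose k * (k.factorial * k.factorial) := by
          rw [← h1, show 2 * k - k = k by omega]; ring
      _ ≤ 4 ^ k * (k.factorial * k.factorial) :=
          Nat.mul_le_mul_right _ (h3 ▸ h2)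
  exact_mod_cast h4

lemma RR_sq_integral_le (hab : a ≤ b) (k : ℕ) :
    (∫ x in a..b, (RR a b k).eval x ^ 2)
      ≤ (k.factorial : ℝ) ^ 2 * ((b - a) ^ k) ^ 2 * (b - a) := by
  have h0 := ibp_iter (a := a) (b := b) k (RR a b k) k le_rfl
  have hD : derivative^[k] (RR a b k) = C (((2 * k).factorial : ℝ)) := by
    rw [RR, ← Function.iterate_add_apply, show k + k = 2 * k by ring, iter_deriv_ff_top]
  rw [hD, Nat.sub_self, Function.iterate_zero_apply] at h0
  have h1 : (∫ x in a..b, (RR a b k).eval x ^ 2)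
      = (-1 : ℝ) ^ k * ((∫ x in a..b, (ff a b k).eval x) * ((2 * k).factorial : ℝ)) := by
    rw [← intervalIntegral.integral_mul_const]
    simp only [eval_C] at h0
    rw [← h0]
    congr 1; funext x; ring
  have h2 : (-1 : ℝ) ^ k * (∫ x in a..b, (ff a b k).eval x)
      = ∫ x in a..b, ((x - a) * (b - x)) ^ k := by
    rw [← intervalIntegral.integral_const_mul]
    congr 1; funext x
    rw [ff, eval_pow, eval_mul, eval_sub, eval_sub, eval_X, eval_C, eval_C, ← mul_pow]
    congr 1; ring
  have h3 : (∫ x in a..b, ((x - a) * (b - x)) ^ k)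
      ≤ ∫ x in a..b, ((b - a) ^ 2 / 4) ^ k := by
    apply integral_mono_on hab
    · exact (((continuous_id.sub continuous_const).mul
        (continuous_const.sub continuous_id)).pow k).intervalIntegrable a b
    · exact intervalIntegrable_const
    · intro x hx
      have h4 : (x - a) * (b - x) ≤ (b - a) ^ 2 / 4 := by
        rcases hx with ⟨hx1, hx2⟩
        nlinarith [sq_nonneg ((x - a) - (b - x))]
      have h5 : 0 ≤ (x - a) * (b - x) := by
        rcases hx with ⟨hx1, hx2⟩
        nlinarith
      exact pow_le_pow_left₀ h5 h4 k
  have h6 : (∫ x in a..b, ((b - a) ^ 2 / 4) ^ k) = (b - a) * ((b - a) ^ 2 / 4) ^ k := by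
    rw [intervalIntegral.integral_const, smul_eq_mul]
  have hfact := fact_bound k
  have ht : (0 : ℝ) ≤ b - a := by linarith
  have h7 : (-1 : ℝ) ^ k * ((∫ x in a..b, (ff a b k).eval x) * ((2 * k).factorial : ℝ))
      = ((-1 : ℝ) ^ k * ∫ x in a..b, (ff a b k).eval x) * ((2 * k).factorial : ℝ) := by ring
  rw [h1, h7, h2]
  calc (∫ x in a..b, ((x - a) * (b - x)) ^ k) * ((2 * k).factorial : ℝ)
      ≤ ((b - a) * ((b - a) ^ 2 / 4) ^ k) * (4 ^ k * ((k.factorial : ℝ) * k.factorial)) := by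
        apply mul_le_mul (h6 ▸ h3) hfact (by positivity)
        have := h6 ▸ h3
        positivity
    _ = (k.factorial : ℝ) ^ 2 * ((b - a) ^ k) ^ 2 * (b - a) := by
        rw [div_pow, ← pow_mul, ← pow_mul]
        have h4 : (4 : ℝ) ^ k ≠ 0 := by positivity
        field_simp
        ring


lemma poly_zero_of_integral_sq (hab : a < b) {w : ℝ[X]}
    (h : (∫ x in a..b, w.eval x ^ 2) = 0) : w = 0 := by
  by_contra hne
  have hint : IntervalIntegrable (fun x => w.eval x ^ 2) volume a b :=
    (w.continuous.pow 2).intervalIntegrable a b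
  have hae := (integral_eq_zero_iff_of_le_of_nonneg_ae hab.le
    (Filter.Eventually.of_forall fun x => sq_nonneg _) hint).mp h
  have h1 : (volume.restrict (Set.Ioc a b)) {x : ℝ | ¬ w.eval x = 0} = 0 := by
    rw [Filter.EventuallyEq, ae_iff] at hae
    simpa [pow_eq_zero_iff] using hae
  rw [Measure.restrict_apply' measurableSet_Ioc] at h1
  have hroots : volume {x : ℝ | w.IsRoot x} = 0 :=
    (Polynomial.finite_setOf_isRoot hne).measure_zero volume
  have hsub : Set.Ioc a b ⊆ {x : ℝ | w.IsRoot x} ∪ ({x : ℝ | ¬ w.eval x = 0} ∩ Set.Ioc a b) := by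
    intro x hxm
    by_cases hr : w.IsRoot x
    · exact Or.inl hr
    · exact Or.inr ⟨hr, hxm⟩
  have hle : volume (Set.Ioc a b) = 0 := by
    have hA := measure_mono (μ := volume) hsub
    have hB := measure_union_le (μ := volume) {x : ℝ | w.IsRoot x}
      ({x : ℝ | ¬ w.eval x = 0} ∩ Set.Ioc a b)
    rw [hroots, h1] at hB
    simpa using hA.trans hB
  rw [Real.volume_Ioc] at hle
  have : b - a ≤ 0 := by
    by_contra hc
    push_neg at hc
    exact (ENNReal.ofReal_pos.mpr hc).ne' hle
  linarith

lemma int_lin (P Q ψ : ℝ[X]) (c : ℝ) (a b : ℝ) :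
    (∫ x in a..b, (P - c • Q).eval x * ψ.eval x)
      = (∫ x in a..b, P.eval x * ψ.eval x) - c * ∫ x in a..b, Q.eval x * ψ.eval x := by
  have h1 : (fun x => (P - c • Q).eval x * ψ.eval x)
      = fun x => P.eval x * ψ.eval x - c * (Q.eval x * ψ.eval x) := by
    funext x
    simp only [eval_sub, eval_smul, smul_eq_mul]
    ring
  rw [h1, integral_sub (pii2 _ _ _ _) ((pii2 Q ψ a b).const_mul c), intervalIntegral.integral_const_mul]

lemma decomp (hab : a < b) (p : ℕ) (v : ℝ[X]) (hv : v.natDegree ≤ p + 1)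
    (horth : ∀ ψ : ℝ[X], ψ.degree < (p : ℕ) → (∫ x in a..b, v.eval x * ψ.eval x) = 0) :
    ∃ c d : ℝ, v = c • RR a b p + d • RR a b (p + 1) := by
  set d0 : ℝ := v.coeff (p + 1) / (RR a b (p + 1)).coeff (p + 1) with hd0
  set w1 : ℝ[X] := v - d0 • RR a b (p + 1) with hw1
  have hw1deg : w1.natDegree ≤ p := by
    rw [natDegree_le_iff_coeff_eq_zero]
    intro N hN
    rcases eq_or_lt_of_le (Nat.succ_le_of_lt hN) with hN1 | hN1
    · rw [hw1, coeff_sub, coeff_smul, ← hN1, smul_eq_mul, hd0,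
        div_mul_cancel₀ _ (coeff_RR_ne_zero a b (p + 1)), sub_self]
    · rw [hw1, coeff_sub, coeff_smul, coeff_eq_zero_of_natDegree_lt (lt_of_le_of_lt hv hN1),
        coeff_eq_zero_of_natDegree_lt (lt_of_le_of_lt (natDegree_RR a b (p + 1)) hN1),
        smul_zero, sub_self]
  set c0 : ℝ := w1.coeff p / (RR a b p).coeff p with hc0
  set w : ℝ[X] := w1 - c0 • RR a b p with hw
  have hwdeg : w.degree < (p : ℕ) := by
    rw [degree_lt_iff_coeff_zero]
    intro m hm
    have hm' : p ≤ m := by exact_mod_cast hm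
    rcases eq_or_lt_of_le hm' with hm1 | hm1
    · rw [hw, coeff_sub, coeff_smul, ← hm1, smul_eq_mul, hc0,
        div_mul_cancel₀ _ (coeff_RR_ne_zero a b p), sub_self]
    · rw [hw, coeff_sub, coeff_smul, coeff_eq_zero_of_natDegree_lt (lt_of_le_of_lt hw1deg hm1),
        coeff_eq_zero_of_natDegree_lt (lt_of_le_of_lt (natDegree_RR a b p) hm1),
        smul_zero, sub_self]
  have hvw : ∫ x in a..b, v.eval x * w.eval x = 0 := horth w hwdeg
  have hpw : ∫ x in a..b, (RR a b p).eval x * w.eval x = 0 := orth_RR hwdeg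
  have hp1w : ∫ x in a..b, (RR a b (p + 1)).eval x * w.eval x = 0 :=
    orth_RR (lt_trans hwdeg (by exact_mod_cast Nat.lt_succ_self p))
  have hww : (∫ x in a..b, w.eval x ^ 2) = 0 := by
    have h3 := int_lin w1 (RR a b p) w c0 a b
    rw [← hw] at h3
    have h4 := int_lin v (RR a b (p + 1)) w d0 a b
    rw [← hw1] at h4
    rw [h4, hvw, hp1w, hpw] at h3
    have h1 : (∫ x in a..b, w.eval x ^ 2) = ∫ x in a..b, w.eval x * w.eval x := by
      congr 1; funext x; ring
    rw [h1, h3]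
    ring
  have hw0 : w = 0 := poly_zero_of_integral_sq hab hww
  refine ⟨c0, d0, ?_⟩
  have : v - d0 • RR a b (p + 1) - c0 • RR a b p = 0 := by
    rw [← hw1, ← hw]; exact hw0
  rw [sub_sub, sub_eq_zero] at this
  rw [this]
  abel


lemma component_bound (hab : a < b) (p : ℕ) (v : ℝ[X]) (hv : v.natDegree ≤ p + 1)
    (horth : ∀ ψ : ℝ[X], ψ.degree < (p : ℕ) → (∫ x in a..b, v.eval x * ψ.eval x) = 0) :
    (∫ x in a..b, v.eval x ^ 2) ≤ (b - a) * (v.eval a ^ 2 + v.eval b ^ 2) := by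
  obtain ⟨c, d, hcd⟩ := decomp hab p v hv horth
  set P := RR a b p with hP
  set Q := RR a b (p + 1) with hQ
  have hcross : (∫ x in a..b, Q.eval x * P.eval x) = 0 := by
    apply orth_RR
    calc P.degree ≤ (P.natDegree : WithBot ℕ) := degree_le_natDegree
      _ ≤ (p : WithBot ℕ) := by exact_mod_cast natDegree_RR a b p
      _ < ((p + 1 : ℕ) : WithBot ℕ) := by exact_mod_cast Nat.lt_succ_self p
  have hexp : (∫ x in a..b, v.eval x ^ 2)
      = c ^ 2 * (∫ x in a..b, P.eval x ^ 2) + (2 * c * d) * (∫ x in a..b, Q.eval x * P.eval x)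
        + d ^ 2 * (∫ x in a..b, Q.eval x ^ 2) := by
    rw [← intervalIntegral.integral_const_mul, ← intervalIntegral.integral_const_mul,
      ← intervalIntegral.integral_const_mul,
      ← integral_add (f := fun x => c ^ 2 * P.eval x ^ 2) (((P.continuous.pow 2).intervalIntegrable a b).const_mul _)
        ((pii2 Q P a b).const_mul _),
      ← integral_add (f := fun x => c ^ 2 * P.eval x ^ 2 + 2 * c * d * (Q.eval x * P.eval x))
        (g := fun x => d ^ 2 * Q.eval x ^ 2)
        ((((P.continuous.pow 2).intervalIntegrable a b).const_mul _).add
          ((pii2 Q P a b).const_mul _))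
        (((Q.continuous.pow 2).intervalIntegrable a b).const_mul _)]
    congr 1; funext x
    rw [hcd]
    simp only [eval_add, eval_smul, smul_eq_mul]
    ring
  have hNp := RR_sq_integral_le hab.le p
  have hNq := RR_sq_integral_le hab.le (p + 1)
  rw [← hP] at hNp
  rw [← hQ] at hNq
  set A : ℝ := (p.factorial : ℝ) * (b - a) ^ p with hA
  set B : ℝ := ((p + 1).factorial : ℝ) * (b - a) ^ (p + 1) with hB
  have hPb : P.eval b = A := eval_RR_b p
  have hQb : Q.eval b = B := eval_RR_b (p + 1)
  have hsgn : ∀ k : ℕ, ((a - b) ^ k : ℝ) = (-1) ^ k * (b - a) ^ k := by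
    intro k
    rw [show a - b = -(b - a) by ring, neg_pow]
  have hPa : P.eval a = (-1) ^ p * A := by
    rw [hP, eval_RR_a, hsgn, hA]; ring
  have hQa : Q.eval a = (-1) ^ (p + 1) * B := by
    rw [hQ, eval_RR_a, hsgn, hB]; ring
  have hva : v.eval a = c * ((-1) ^ p * A) + d * ((-1) ^ (p + 1) * B) := by
    rw [hcd, eval_add, eval_smul, eval_smul, smul_eq_mul, smul_eq_mul, hPa, hQa]
  have hvb : v.eval b = c * A + d * B := by
    rw [hcd, eval_add, eval_smul, eval_smul, smul_eq_mul, smul_eq_mul, hPb, hQb]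
  have hs : ((-1 : ℝ) ^ p) ^ 2 = 1 := by
    rw [← pow_mul, mul_comm, pow_mul]; norm_num
  have hend : v.eval a ^ 2 + v.eval b ^ 2 = 2 * c ^ 2 * A ^ 2 + 2 * d ^ 2 * B ^ 2 := by
    rw [hva, hvb, pow_succ]
    linear_combination ((c * A - d * B) ^ 2) * hs
  rw [hexp, hcross, hend]
  have hAB2 : (p.factorial : ℝ) ^ 2 * ((b - a) ^ p) ^ 2 * (b - a) = A ^ 2 * (b - a) := by
    rw [hA]; ring
  have hAB3 : ((p + 1).factorial : ℝ) ^ 2 * ((b - a) ^ (p + 1)) ^ 2 * (b - a)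
      = B ^ 2 * (b - a) := by
    rw [hB]; ring
  rw [hAB2] at hNp
  rw [hAB3] at hNq
  nlinarith [sq_nonneg c, sq_nonneg d, sq_nonneg A, sq_nonneg B, hab,
    mul_le_mul_of_nonneg_left hNp (sq_nonneg c), mul_le_mul_of_nonneg_left hNq (sq_nonneg d)]

end CellBound

/-- **L₂ bound for an almost-orthogonal cell polynomial** (the bound underlying (5.18) of
the paper): an `ℝ^d`-valued polynomial `v` of degree `≤ p+1` on the cell
`I_n = [x_n, x_{n+1}]` of length `h_n` that is `L₂(I_n)`-orthogonal to all polynomials of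
degree `≤ p-1` (expressed as `degree < p`) satisfies
`‖v‖²_{L₂(I_n)} ≤ h_n (|v(x_n)|² + |v(x_{n+1})|²)` with `|·|` the Euclidean norm. -/
theorem cell_orthogonal_L2_bound
    (d : ℕ) (hd : 1 ≤ d) (p : ℕ)
    (xn xnp : ℝ) (hx : xn < xnp)
    (V : Fin d → Polynomial ℝ) (hV : ∀ i, (V i).natDegree ≤ p + 1)
    (horthV : ∀ φ : Fin d → Polynomial ℝ, (∀ i, (φ i).degree < (p : ℕ)) →
      (∫ x in xn..xnp, ∑ i, (V i).eval x * (φ i).eval x) = 0) :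
    (∫ x in xn..xnp, ∑ i, ((V i).eval x) ^ 2) ≤
      (xnp - xn) * ((∑ i, ((V i).eval xn) ^ 2) + ∑ i, ((V i).eval xnp) ^ 2) := by
  have horth_i : ∀ i, ∀ ψ : Polynomial ℝ, ψ.degree < (p : ℕ) →
      (∫ x in xn..xnp, (V i).eval x * ψ.eval x) = 0 := by
    intro i ψ hψ
    have hφ : ∀ j, ((fun j => if j = i then ψ else 0) j).degree < (p : ℕ) := by
      intro j
      by_cases h : j = i
      · simpa [h] using hψ
      · simp only [h, if_false, Polynomial.degree_zero]
        exact lt_of_lt_of_le (by exact_mod_cast WithBot.bot_lt_coe p) le_rfl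
    have h0 := horthV (fun j => if j = i then ψ else 0) hφ
    have h1 : (fun x => ∑ j, (V j).eval x * ((if j = i then ψ else 0) : Polynomial ℝ).eval x)
        = fun x => (V i).eval x * ψ.eval x := by
      funext x
      rw [Finset.sum_eq_single_of_mem i (Finset.mem_univ i)]
      · simp
      · intro j _ hj
        simp [hj]
    rw [h1] at h0
    exact h0
  have hint : ∀ i : Fin d, IntervalIntegrable (fun x => (V i).eval x ^ 2) MeasureTheory.volume
      xn xnp := fun i => ((V i).continuous.pow 2).intervalIntegrable xn xnp
  rw [intervalIntegral.integral_finset_sum (fun i _ => hint i)]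
  have hle : ∀ i : Fin d, (∫ x in xn..xnp, (V i).eval x ^ 2)
      ≤ (xnp - xn) * ((V i).eval xn ^ 2 + (V i).eval xnp ^ 2) :=
    fun i => CellBound.component_bound hx p (V i) (hV i) (horth_i i)
  calc (∑ i, ∫ x in xn..xnp, (V i).eval x ^ 2)
      ≤ ∑ i, (xnp - xn) * ((V i).eval xn ^ 2 + (V i).eval xnp ^ 2) :=
        Finset.sum_le_sum fun i _ => hle i
    _ = (xnp - xn) * ((∑ i, ((V i).eval xn) ^ 2) + ∑ i, ((V i).eval xnp) ^ 2) := by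
        rw [← Finset.mul_sum, Finset.sum_add_distrib]
end
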